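/- A finite simple graph G on n vertices is chordal if and only if it admits a perfect elimination ordering, i.e., an enumeration v₁, …, vₙ of its vertices such that for every i, the set of vertices vⱼ with j > i that are adjacent to vᵢ is a clique of G. -/

import Mathlib

/-- A finite simple graph is chordal if every cycle of length at least four has a chord,
i.e., an edge of the graph joining two vertices of the cycle that is not an edge of the cycle. -/
def SimpleGraph.IsChordal {V : Type*} (G : SimpleGraph V) : Prop :=
  ∀ ⦃v : V⦄ (w : G.Walk v v), w.IsCycle → 4 ≤ w.length →
    ∃ x y, x ∈ w.support ∧ y ∈ w.support ∧ G.Adj x y ∧ s(x, y) ∉ w.edges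

open SimpleGraph Walk

namespace ChordalPEO
universe u

section basic
variable {V W : Type*}

lemma isChordal_comap {G : SimpleGraph W} (f : V ↪ W) (h : G.IsChordal) :
    (G.comap f).IsChordal := by
  intro v w hc hl
  have hc' : (w.map (SimpleGraph.Hom.comap f G)).IsCycle :=
    (Walk.map_isCycle_iff_of_injective f.injective).mpr hc
  obtain ⟨x, y, hx, hy, hadj, hne⟩ := h _ hc' (by rwa [Walk.length_map])
  rw [Walk.support_map] at hx hy
  obtain ⟨a, ha, rfl⟩ := List.mem_map.mp hx
  obtain ⟨b, hb, rfl⟩ := List.mem_map.mp hy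
  refine ⟨a, b, ha, hb, hadj, fun hmem => hne ?_⟩
  rw [Walk.edges_map]
  exact List.mem_map.mpr ⟨s(a, b), hmem, by simp [Sym2.map_pair_eq]⟩


end basic

section decf
variable {V : Type*} [DecidableEq V] {G : SimpleGraph V}

lemma length_dropUntil_lt {u v y : V} (p : G.Walk u v) (h : y ∈ p.support) (hy : y ≠ u) :
    (p.dropUntil y h).length < p.length := by
  have hspec := congrArg Walk.length (p.take_spec h)
  rw [Walk.length_append] at hspec
  have h0 : (p.takeUntil y h).length ≠ 0 := fun h0 => hy (Walk.eq_of_length_eq_zero h0).symm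
  omega

lemma shortcut {x y : V} (hadj : G.Adj x y) :
    ∀ {u v : V} (p : G.Walk u v), p.IsPath → x ∈ p.support → y ∈ p.support →
      s(x, y) ∉ p.edges →
      ∃ q : G.Walk u v, q.length < p.length ∧ ∀ z ∈ q.support, z ∈ p.support := by
  intro u v p
  induction p with
  | nil =>
    intro _ hx hy _
    simp only [Walk.support_nil, List.mem_singleton] at hx hy
    exact absurd (hx.trans hy.symm) hadj.ne
  | @cons u w v h p ih =>
    intro hp hx hy he
    have hpp : p.IsPath := hp.of_cons
    have hne : s(x, y) ≠ s(u, w) := fun hxy => he (by rw [hxy]; simp)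
    rw [Walk.support_cons, List.mem_cons] at hx hy
    have hep : s(x, y) ∉ p.edges := fun hmem => he (by simp [hmem])
    rcases hx with rfl | hx
    · rcases hy with rfl | hy
      · exact absurd rfl hadj.ne
      · have hyw : y ≠ w := by
          rintro rfl; exact hne (by rw [Sym2.eq_swap])  -- s(u,y)=s(u,w)? y=w: s(x,y)=s(u,w) directly
        refine ⟨Walk.cons hadj (p.dropUntil y hy), ?_, ?_⟩
        · simpa using Nat.succ_lt_succ (length_dropUntil_lt p hy hyw)
        · intro z hz
          rw [Walk.support_cons, List.mem_cons] at hz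
          rcases hz with rfl | hz
          · simp
          · simp [Walk.support_dropUntil_subset p hy hz]
    · rcases hy with rfl | hy
      · have hxw : x ≠ w := by
          rintro rfl; exact hne (Sym2.eq_swap)
        refine ⟨Walk.cons hadj.symm (p.dropUntil x hx), ?_, ?_⟩
        · simpa using Nat.succ_lt_succ (length_dropUntil_lt p hx hxw)
        · intro z hz
          rw [Walk.support_cons, List.mem_cons] at hz
          rcases hz with rfl | hz
          · simp
          · simp [Walk.support_dropUntil_subset p hx hz]
      · obtain ⟨q, hql, hqs⟩ := ih hpp hx hy hep
        refine ⟨Walk.cons h q, by simpa using Nat.succ_lt_succ hql, ?_⟩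
        intro z hz
        rw [Walk.support_cons, List.mem_cons] at hz
        rcases hz with rfl | hz
        · simp
        · simp [hqs z hz]


def avoid (G : SimpleGraph V) (S : Set V) : SimpleGraph V where
  Adj x y := G.Adj x y ∧ x ∉ S ∧ y ∉ S
  symm := ⟨fun x y ⟨h, hx, hy⟩ => ⟨h.symm, hy, hx⟩⟩
  loopless := ⟨fun x ⟨h, _, _⟩ => G.ne_of_adj h rfl⟩

variable {G : SimpleGraph V}

lemma avoid_le (S : Set V) : avoid G S ≤ G := fun _ _ h => h.1

lemma not_mem_of_avoid_walk {S : Set V} {a x : V} (w : (avoid G S).Walk a x) (ha : a ∉ S) :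
    x ∉ S := by
  induction w with
  | nil => exact ha
  | cons h _ ih => exact ih h.2.2

lemma not_mem_of_avoid_reachable {S : Set V} {a x : V} (h : (avoid G S).Reachable a x)
    (ha : a ∉ S) : x ∉ S := by
  obtain ⟨w⟩ := h; exact not_mem_of_avoid_walk w ha

lemma avoid_reachable_extend {S : Set V} {a x y : V} (hr : (avoid G S).Reachable a x)
    (ha : a ∉ S) (hy : y ∉ S) (hadj : G.Adj x y) : (avoid G S).Reachable a y :=
  hr.trans (SimpleGraph.Adj.reachable ⟨hadj, not_mem_of_avoid_reachable hr ha, hy⟩)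

lemma avoid_support_reachable {S : Set V} {x z u : V} (w : (avoid G S).Walk x z)
    (hu : u ∈ w.support) : (avoid G S).Reachable x u := ⟨w.takeUntil u hu⟩

/-- separator predicate -/
def Sep (G : SimpleGraph V) (a b : V) (S : Finset V) : Prop :=
  a ∉ S ∧ b ∉ S ∧ ¬(avoid G ↑S).Reachable a b

lemma sep_exists [Fintype V] {a b : V} (hne : a ≠ b) (hnadj : ¬G.Adj a b) :
    Sep G a b (Finset.univ \ {a, b}) := by
  refine ⟨by simp, by simp, ?_⟩
  rintro ⟨w⟩
  cases w with
  | nil => exact hne rfl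
  | cons h w' =>
    obtain ⟨hadj, -, hy⟩ := h
    simp only [Finset.coe_sdiff, Finset.coe_univ, Finset.coe_insert, Finset.coe_singleton,
      Set.mem_diff, Set.mem_univ, true_and, Set.mem_insert_iff, Set.mem_singleton_iff,
      not_not] at hy
    rcases hy with rfl | rfl
    · exact hadj.ne rfl
    · exact hnadj hadj

lemma walk_key {S : Finset V} {a b s : V} (ha : a ∉ (↑S : Set V)) (hs : s ∈ S)
    (hnr : ¬(avoid G ↑S).Reachable a b) :
    ∀ {x : V} (_ : (avoid G ↑(S.erase s)).Walk x b), (avoid G ↑S).Reachable a x →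
      ∃ y, (avoid G ↑S).Reachable a y ∧ G.Adj s y := by
  intro x w
  induction w with
  | nil => exact fun hr => absurd hr hnr
  | @cons x y b h w' ih =>
    intro hrx
    obtain ⟨hadj, -, hy⟩ := h
    by_cases hys : y = s
    · exact ⟨x, hrx, hys ▸ hadj.symm⟩
    · have hyS : y ∉ (↑S : Set V) := by
        simp only [Finset.coe_erase, Set.mem_diff] at hy
        intro hmem; exact hy ⟨hmem, by simpa using hys⟩
      exact ih hnr (avoid_reachable_extend hrx ha hyS hadj)


lemma support_mapLe {G' : SimpleGraph V} (h : G ≤ G') {u v : V} (p : G.Walk u v) :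
    (p.mapLe h).support = p.support := by
  rw [Walk.mapLe, Walk.support_map]
  exact List.map_id' _

lemma exists_cond_walk {S : Set V} {c s t : V} (hc : c ∉ S)
    (hsa : ∃ x, (avoid G S).Reachable c x ∧ G.Adj s x)
    (hta : ∃ x, (avoid G S).Reachable c x ∧ G.Adj t x) :
    ∃ w : G.Walk s t, ∀ z ∈ w.support, z = s ∨ z = t ∨ (avoid G S).Reachable c z := by
  obtain ⟨sa, hrsa, hssa⟩ := hsa
  obtain ⟨ta, hrta, htta⟩ := hta
  obtain ⟨w0⟩ := hrsa.symm.trans hrta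
  refine ⟨Walk.cons hssa ((w0.mapLe (avoid_le S)).concat htta.symm), ?_⟩
  intro z hz
  rw [Walk.support_cons, List.mem_cons] at hz
  rcases hz with rfl | hz
  · exact Or.inl rfl
  rw [Walk.support_concat, List.mem_append, support_mapLe] at hz
  rcases hz with hz | hz
  · exact Or.inr (Or.inr (hrsa.trans (avoid_support_reachable w0 hz)))
  · simp only [List.mem_singleton] at hz
    exact Or.inr (Or.inl hz)

lemma exists_min_walk {s t : V} (A : Set V)
    (h : ∃ w : G.Walk s t, ∀ z ∈ w.support, z = s ∨ z = t ∨ z ∈ A) :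
    ∃ p : G.Walk s t, p.IsPath ∧ (∀ z ∈ p.support, z = s ∨ z = t ∨ z ∈ A) ∧
      ∀ w : G.Walk s t, (∀ z ∈ w.support, z = s ∨ z = t ∨ z ∈ A) → p.length ≤ w.length := by
  classical
  have hP : ∃ k, ∃ w : G.Walk s t, (∀ z ∈ w.support, z = s ∨ z = t ∨ z ∈ A) ∧ w.length = k := by
    obtain ⟨w, hw⟩ := h; exact ⟨w.length, w, hw, rfl⟩
  obtain ⟨w₁, hw₁, hlen₁⟩ := Nat.find_spec hP
  have hmin : ∀ w : G.Walk s t, (∀ z ∈ w.support, z = s ∨ z = t ∨ z ∈ A) →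
      Nat.find hP ≤ w.length := fun w hw => Nat.find_min' hP ⟨w, hw, rfl⟩
  refine ⟨w₁.bypass, w₁.bypass_isPath, ?_, ?_⟩
  · exact fun z hz => hw₁ z (w₁.support_bypass_subset hz)
  · intro w hw
    calc w₁.bypass.length ≤ w₁.length := w₁.length_bypass_le
      _ = Nat.find hP := hlen₁
      _ ≤ w.length := hmin w hw


lemma adj_of_length_one {u v : V} {w : G.Walk u v} (h : w.length = 1) : G.Adj u v := by
  cases w with
  | nil => simp at h
  | @cons _ m _ hadj w' =>
    rw [Walk.length_cons] at h
    have h0 : w'.length = 0 := by omega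
    have hm : m = v := Walk.eq_of_length_eq_zero h0
    exact hm ▸ hadj

lemma sep_clique (hch : SimpleGraph.IsChordal G) {a b : V} {S : Finset V}
    (ha : a ∉ (↑S : Set V)) (hb : b ∉ (↑S : Set V))
    (hnr : ¬(avoid G ↑S).Reachable a b)
    (hnbrA : ∀ s ∈ S, ∃ x, (avoid G ↑S).Reachable a x ∧ G.Adj s x)
    (hnbrB : ∀ s ∈ S, ∃ x, (avoid G ↑S).Reachable b x ∧ G.Adj s x) :
    ∀ s ∈ S, ∀ t ∈ S, s ≠ t → G.Adj s t := by
  intro s hs t ht hst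
  by_contra hadj
  set A : Set V := {x | (avoid G ↑S).Reachable a x} with hA
  set B : Set V := {x | (avoid G ↑S).Reachable b x} with hB
  have hAB : ∀ z, z ∈ A → z ∈ B → False := fun z h1 h2 => hnr (h1.trans h2.symm)
  have hAS : ∀ z, z ∈ A → z ∉ (↑S : Set V) := fun z h1 => not_mem_of_avoid_reachable h1 ha
  have hBS : ∀ z, z ∈ B → z ∉ (↑S : Set V) := fun z h1 => not_mem_of_avoid_reachable h1 hb
  obtain ⟨p, hpp, hpc, hpm⟩ := exists_min_walk A (exists_cond_walk ha (hnbrA s hs) (hnbrA t ht))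
  obtain ⟨q, hqp, hqc, hqm⟩ := exists_min_walk B (exists_cond_walk hb (hnbrB s hs) (hnbrB t ht))
  have hp2 : 2 ≤ p.length := by
    by_contra hlt
    have h01 : p.length = 0 ∨ p.length = 1 := by omega
    rcases h01 with h0 | h1
    · exact hst (Walk.eq_of_length_eq_zero h0)
    · exact hadj (adj_of_length_one h1)
  have hq2 : 2 ≤ q.length := by
    by_contra hlt
    have h01 : q.length = 0 ∨ q.length = 1 := by omega
    rcases h01 with h0 | h1
    · exact hst (Walk.eq_of_length_eq_zero h0)
    · exact hadj (adj_of_length_one h1)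
  set c : G.Walk s s := p.append q.reverse with hc
  have hclen : c.length = p.length + q.length := by
    rw [hc, Walk.length_append, Walk.length_reverse]
  have hqrp : q.reverse.IsPath := hqp.reverse
  have hsp : s ∉ p.support.tail := by
    have hnd := hpp.support_nodup
    rw [p.support_eq_cons] at hnd
    exact (List.nodup_cons.mp hnd).1
  have htq : t ∉ q.reverse.support.tail := by
    have hnd := hqrp.support_nodup
    rw [q.reverse.support_eq_cons] at hnd
    exact (List.nodup_cons.mp hnd).1
  have hptail : ∀ z ∈ p.support.tail, z = t ∨ z ∈ A := by
    intro z hz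
    rcases hpc z (List.tail_subset _ hz) with rfl | h | h
    · exact absurd hz hsp
    · exact Or.inl h
    · exact Or.inr h
  have hqrtail : ∀ z ∈ q.reverse.support.tail, z = s ∨ z ∈ B := by
    intro z hz
    have hzq : z ∈ q.support := by
      have := List.tail_subset _ hz
      rwa [Walk.support_reverse, List.mem_reverse] at this
    rcases hqc z hzq with rfl | rfl | h
    · exact Or.inl rfl
    · exact absurd hz htq
    · exact Or.inr h
  have hmem2 : ∀ z, z ∈ p.support → z ∈ q.support → z = s ∨ z = t := by
    intro z h1 h2
    rcases hpc z h1 with rfl | rfl | hzA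
    · exact Or.inl rfl
    · exact Or.inr rfl
    · rcases hqc z h2 with rfl | rfl | hzB
      · exact absurd (Finset.mem_coe.mpr hs) (hAS _ hzA)
      · exact absurd (Finset.mem_coe.mpr ht) (hAS _ hzA)
      · exact absurd hzB (fun h => hAB _ hzA h)
  have hedis : ∀ e ∈ p.edges, e ∉ q.reverse.edges := by
    intro e hep heq
    rw [Walk.edges_reverse, List.mem_reverse] at heq
    revert hep heq
    induction e using Sym2.ind with
    | _ u₁ u₂ =>
      intro hep heq
      have hadj' := p.adj_of_mem_edges hep
      rcases hmem2 u₁ (p.fst_mem_support_of_mem_edges hep) (q.fst_mem_support_of_mem_edges heq)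
        with rfl | rfl <;>
      rcases hmem2 u₂ (p.snd_mem_support_of_mem_edges hep) (q.snd_mem_support_of_mem_edges heq)
        with rfl | rfl
      · exact hadj'.ne rfl
      · exact hadj hadj'
      · exact hadj hadj'.symm
      · exact hadj'.ne rfl
  have hctrail : c.IsTrail := by
    constructor
    rw [hc, Walk.edges_append]
    exact List.Nodup.append hpp.isTrail.edges_nodup hqrp.isTrail.edges_nodup hedis
  have hctail : c.support.tail.Nodup := by
    rw [hc, Walk.tail_support_append]
    refine List.Nodup.append hpp.support_nodup.tail hqrp.support_nodup.tail ?_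
    intro z hz1 hz2
    rcases hptail z hz1 with rfl | hzA
    · rcases hqrtail z hz2 with h | hzB
      · exact hst h.symm
      · exact hBS _ hzB (Finset.mem_coe.mpr ht)
    · rcases hqrtail z hz2 with rfl | hzB
      · exact hAS _ hzA (Finset.mem_coe.mpr hs)
      · exact hAB _ hzA hzB
  have hcyc : c.IsCycle := by
    rw [Walk.isCycle_def]
    refine ⟨hctrail, ?_, hctail⟩
    intro hnil
    have : c.length = 0 := by rw [hnil]; rfl
    omega
  obtain ⟨x, y, hx, hy, hxyadj, hxye⟩ := hch c hcyc (by omega)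
  have hsplit : ∀ z, z ∈ c.support → z ∈ p.support ∨ z ∈ q.support := by
    intro z hz
    rw [hc, Walk.support_append, List.mem_append] at hz
    rcases hz with hz | hz
    · exact Or.inl hz
    · have := List.tail_subset _ hz
      rw [Walk.support_reverse, List.mem_reverse] at this
      exact Or.inr this
  have hPP : x ∈ p.support → y ∈ p.support → False := by
    intro hxp hyp
    have hep : s(x, y) ∉ p.edges := fun h =>
      hxye (by rw [hc, Walk.edges_append]; exact List.mem_append_left _ h)
    obtain ⟨p', hp'l, hp's⟩ := shortcut hxyadj p hpp hxp hyp hep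
    have := hpm p' (fun z hz => hpc z (hp's z hz))
    omega
  have hQQ : x ∈ q.support → y ∈ q.support → False := by
    intro hxq hyq
    have heq : s(x, y) ∉ q.edges := fun h =>
      hxye (by
        rw [hc, Walk.edges_append]
        refine List.mem_append_right _ ?_
        rw [Walk.edges_reverse, List.mem_reverse]; exact h)
    obtain ⟨q', hq'l, hq's⟩ := shortcut hxyadj q hqp hxq hyq heq
    have := hqm q' (fun z hz => hqc z (hq's z hz))
    omega
  have hMIX : ∀ u w, G.Adj u w → u ∈ p.support → w ∈ q.support →
      u ∉ q.support → w ∉ p.support → False := by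
    intro u w huw hup hwq huq hwp
    have huA : u ∈ A := by
      rcases hpc u hup with rfl | rfl | h
      · exact absurd q.start_mem_support huq
      · exact absurd q.end_mem_support huq
      · exact h
    have hwB : w ∈ B := by
      rcases hqc w hwq with rfl | rfl | h
      · exact absurd p.start_mem_support hwp
      · exact absurd p.end_mem_support hwp
      · exact h
    exact hAB w (avoid_reachable_extend huA ha (hBS w hwB) huw) hwB
  rcases hsplit x hx with hxp | hxq <;> rcases hsplit y hy with hyp | hyq
  · exact hPP hxp hyp
  · by_cases hyp' : y ∈ p.support
    · exact hPP hxp hyp'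
    by_cases hxq' : x ∈ q.support
    · exact hQQ hxq' hyq
    exact hMIX x y hxyadj hxp hyq hxq' hyp'
  · by_cases hxp' : x ∈ p.support
    · exact hPP hxp' hyp
    by_cases hyq' : y ∈ q.support
    · exact hQQ hxq hyq'
    exact hMIX y x hxyadj.symm hyp hxq hyq' hxp'
  · exact hQQ hxq hyq


end decf

def IsSimplicial {V : Type*} (G : SimpleGraph V) (v : V) : Prop := G.IsClique (G.neighborSet v)

set_option maxHeartbeats 1000000 in
lemma exists_simplicial_in_comp {V : Type u} [Fintype V] [DecidableEq V] {G : SimpleGraph V}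
    {n : ℕ} (hch : SimpleGraph.IsChordal G)
    (IH : ∀ (W : Type u) [Fintype W] [DecidableEq W] (H : SimpleGraph W),
      Fintype.card W ≤ n → SimpleGraph.IsChordal H →
      (∀ x y : W, x ≠ y → H.Adj x y) ∨
        ∃ x y : W, x ≠ y ∧ ¬H.Adj x y ∧ IsSimplicial H x ∧ IsSimplicial H y)
    (hcard : Fintype.card V ≤ n + 1)
    {S : Finset V} {c d : V} (hc : c ∉ (↑S : Set V)) (hnr : ¬(avoid G ↑S).Reachable c d)
    (hdS : d ∉ (↑S : Set V))
    (hScl : ∀ s ∈ S, ∀ t ∈ S, s ≠ t → G.Adj s t) :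
    ∃ x, (avoid G ↑S).Reachable c x ∧ IsSimplicial G x := by
  classical
  set A : Set V := {x | (avoid G ↑S).Reachable c x} with hA
  set U : Set V := A ∪ ↑S with hU
  have hdU : d ∉ U := by
    rw [hU, Set.mem_union]
    rintro (hd | hd)
    · exact hnr hd
    · exact hdS hd
  have hcardU : Fintype.card U < Fintype.card V := by
    have h' := Fintype.card_subtype_lt (p := (· ∈ U)) (x := d) hdU
    convert h' using 2
  have hch₁ : SimpleGraph.IsChordal (G.induce U) :=
    isChordal_comap (Function.Embedding.subtype _) hch
  have hclosure : ∀ x, x ∈ A → ∀ y, G.Adj x y → y ∈ U := by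
    intro x hxA y hxy
    by_cases hyS : y ∈ (↑S : Set V)
    · exact Set.mem_union_right _ hyS
    · exact Set.mem_union_left _ (avoid_reachable_extend hxA hc hyS hxy)
  have htrans : ∀ (x : U), (x : V) ∈ A → IsSimplicial (G.induce U) x →
      IsSimplicial G (x : V) := by
    intro x hxA hsimp
    rw [IsSimplicial, SimpleGraph.isClique_iff]
    intro y hy z hz hyz
    have hyU : y ∈ U := hclosure _ hxA y hy
    have hzU : z ∈ U := hclosure _ hxA z hz
    have h1 : (⟨y, hyU⟩ : U) ∈ (G.induce U).neighborSet x := hy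
    have h2 : (⟨z, hzU⟩ : U) ∈ (G.induce U).neighborSet x := hz
    exact hsimp h1 h2 (fun h => hyz (congrArg Subtype.val h))
  rcases IH ↥U (G.induce U) (by omega) hch₁ with hcomp | ⟨u₁, u₂, hne, hnadj, hs₁, hs₂⟩
  · refine ⟨c, Reachable.refl c, ?_⟩
    have hcA : c ∈ A := Reachable.refl c
    rw [IsSimplicial, SimpleGraph.isClique_iff]
    intro y hy z hz hyz
    have hyU : y ∈ U := hclosure _ hcA y hy
    have hzU : z ∈ U := hclosure _ hcA z hz
    exact hcomp ⟨y, hyU⟩ ⟨z, hzU⟩ (fun h => hyz (congrArg Subtype.val h))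
  · have hnboth : ¬((u₁ : V) ∈ (↑S : Set V) ∧ (u₂ : V) ∈ (↑S : Set V)) := by
      rintro ⟨h1, h2⟩
      exact hnadj (hScl _ h1 _ h2 (fun h => hne (Subtype.ext h)))
    have hu₁ : (u₁ : V) ∈ U := u₁.2
    have hu₂ : (u₂ : V) ∈ U := u₂.2
    have hu₁' : (u₁ : V) ∈ A ∨ (u₁ : V) ∈ (↑S : Set V) := (Set.mem_union _ _ _).mp hu₁
    have hu₂' : (u₂ : V) ∈ A ∨ (u₂ : V) ∈ (↑S : Set V) := (Set.mem_union _ _ _).mp hu₂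
    rcases hu₁' with h1 | h1
    · exact ⟨u₁, h1, htrans u₁ h1 hs₁⟩
    · rcases hu₂' with h2 | h2
      · exact ⟨u₂, h2, htrans u₂ h2 hs₂⟩
      · exact absurd ⟨h1, h2⟩ hnboth

theorem dirac (n : ℕ) : ∀ (V : Type u) [Fintype V] [DecidableEq V] (G : SimpleGraph V),
    Fintype.card V ≤ n → SimpleGraph.IsChordal G →
    (∀ x y : V, x ≠ y → G.Adj x y) ∨
      ∃ x y : V, x ≠ y ∧ ¬G.Adj x y ∧ IsSimplicial G x ∧ IsSimplicial G y := by
  induction n with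
  | zero =>
    intro V _ _ G hcard _
    left
    intro x
    haveI : IsEmpty V := Fintype.card_eq_zero_iff.mp (Nat.le_zero.mp hcard)
    exact (IsEmpty.false x).elim
  | succ n IH =>
    intro V _ _ G hcard hch
    classical
    by_cases hcomp : ∀ x y : V, x ≠ y → G.Adj x y
    · exact Or.inl hcomp
    push_neg at hcomp
    obtain ⟨a, b, hab, hnadj⟩ := hcomp
    have hS0 : Sep G a b (Finset.univ \ {a, b}) := sep_exists hab hnadj
    set F : Finset (Finset V) := Finset.univ.filter (fun S => Sep G a b S) with hF
    obtain ⟨S, hSF, hSmin⟩ :=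
      F.exists_min_image Finset.card ⟨_, Finset.mem_filter.mpr ⟨Finset.mem_univ _, hS0⟩⟩
    have hSsep : Sep G a b S := (Finset.mem_filter.mp hSF).2
    obtain ⟨haS, hbS, hnrab⟩ := hSsep
    have hmin' : ∀ S' : Finset V, Sep G a b S' → S.card ≤ S'.card := fun S' h =>
      hSmin S' (Finset.mem_filter.mpr ⟨Finset.mem_univ _, h⟩)
    have hnbrA : ∀ s ∈ S, ∃ x, (avoid G ↑S).Reachable a x ∧ G.Adj s x := by
      intro s hs
      have hnsep : ¬ Sep G a b (S.erase s) := by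
        intro hsep'
        have h1 := hmin' _ hsep'
        have h2 := Finset.card_erase_lt_of_mem hs
        omega
      have haE : a ∉ (↑(S.erase s) : Set V) := fun h =>
        haS (Finset.mem_coe.mpr (Finset.mem_of_mem_erase (Finset.mem_coe.mp h)))
      have hbE : b ∉ (↑(S.erase s) : Set V) := fun h =>
        hbS (Finset.mem_coe.mpr (Finset.mem_of_mem_erase (Finset.mem_coe.mp h)))
      have hr : (avoid G ↑(S.erase s)).Reachable a b := by
        by_contra hr'
        exact hnsep ⟨haE, hbE, hr'⟩
      obtain ⟨w⟩ := hr
      exact walk_key haS hs hnrab w (Reachable.refl a)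
    have hnrba : ¬(avoid G ↑S).Reachable b a := fun h => hnrab h.symm
    have hnbrB : ∀ s ∈ S, ∃ x, (avoid G ↑S).Reachable b x ∧ G.Adj s x := by
      intro s hs
      have hnsep : ¬ Sep G a b (S.erase s) := by
        intro hsep'
        have h1 := hmin' _ hsep'
        have h2 := Finset.card_erase_lt_of_mem hs
        omega
      have haE : a ∉ (↑(S.erase s) : Set V) := fun h =>
        haS (Finset.mem_coe.mpr (Finset.mem_of_mem_erase (Finset.mem_coe.mp h)))
      have hbE : b ∉ (↑(S.erase s) : Set V) := fun h =>
        hbS (Finset.mem_coe.mpr (Finset.mem_of_mem_erase (Finset.mem_coe.mp h)))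
      have hr : (avoid G ↑(S.erase s)).Reachable a b := by
        by_contra hr'
        exact hnsep ⟨haE, hbE, hr'⟩
      obtain ⟨w⟩ := hr
      exact walk_key hbS hs hnrba w.reverse (Reachable.refl b)
    have hScl := sep_clique hch haS hbS hnrab hnbrA hnbrB
    obtain ⟨xA, hxAr, hxAs⟩ := exists_simplicial_in_comp hch IH hcard haS hnrab hbS hScl
    obtain ⟨xB, hxBr, hxBs⟩ := exists_simplicial_in_comp hch IH hcard hbS hnrba haS hScl
    right
    refine ⟨xA, xB, ?_, ?_, hxAs, hxBs⟩
    · rintro rfl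
      exact hnrab (hxAr.trans hxBr.symm)
    · intro hadj'
      have hxB_S : xB ∉ (↑S : Set V) := not_mem_of_avoid_reachable hxBr hbS
      exact hnrab ((avoid_reachable_extend hxAr haS hxB_S hadj').trans hxBr.symm)

theorem exists_simplicial {V : Type u} [Fintype V] [DecidableEq V] [Nonempty V]
    {G : SimpleGraph V} (hch : SimpleGraph.IsChordal G) : ∃ v, IsSimplicial G v := by
  rcases dirac (Fintype.card V) V G le_rfl hch with h | ⟨x, _, _, _, hx, _⟩
  · refine ⟨Classical.arbitrary V, ?_⟩
    rw [IsSimplicial, SimpleGraph.isClique_iff]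
    intro y _ z _ hyz
    exact h y z hyz
  · exact ⟨x, hx⟩

theorem peo_of_chordal : ∀ (n : ℕ) (G : SimpleGraph (Fin n)), SimpleGraph.IsChordal G →
    ∃ σ : Equiv.Perm (Fin n), ∀ i : Fin n,
      G.IsClique {v : Fin n | ∃ j : Fin n, i < j ∧ v = σ j ∧ G.Adj (σ i) (σ j)} := by
  intro n
  induction n with
  | zero => exact fun G _ => ⟨1, fun i => i.elim0⟩
  | succ n IH =>
    intro G hch
    obtain ⟨v, hv⟩ := exists_simplicial hch
    have hinj : Function.Injective v.succAbove := Fin.succAbove_right_injective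
    obtain ⟨σ', hσ'⟩ := IH (G.comap (⟨v.succAbove, hinj⟩ : Fin n ↪ Fin (n + 1)))
      (isChordal_comap _ hch)
    set σ : Equiv.Perm (Fin (n + 1)) :=
      (finSuccEquiv' 0).trans ((Equiv.optionCongr σ').trans (finSuccEquiv' v).symm) with hσdef
    have hσ0 : σ 0 = v := by
      simp [hσdef, finSuccEquiv'_at, finSuccEquiv'_symm_none]
    have hσs : ∀ i : Fin n, σ i.succ = v.succAbove (σ' i) := by
      intro i
      have h1 : (finSuccEquiv' (0 : Fin (n + 1))) i.succ = some i := by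
        rw [← Fin.succAbove_zero, finSuccEquiv'_succAbove]
      simp [hσdef, h1, finSuccEquiv'_symm_some]
    refine ⟨σ, ?_⟩
    intro i
    induction i using Fin.cases with
    | zero =>
      rw [SimpleGraph.isClique_iff]
      rintro x ⟨jx, hjx, rfl, hax⟩ y ⟨jy, hjy, rfl, hay⟩ hne
      rw [hσ0] at hax hay
      exact hv hax hay hne
    | succ i' =>
      rw [SimpleGraph.isClique_iff]
      rintro x ⟨jx, hjx, rfl, hax⟩ y ⟨jy, hjy, rfl, hay⟩ hne
      have hjx0 : jx ≠ 0 := fun h => by simp [h] at hjx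
      have hjy0 : jy ≠ 0 := fun h => by simp [h] at hjy
      obtain ⟨jx', rfl⟩ := Fin.exists_succ_eq.mpr hjx0
      obtain ⟨jy', rfl⟩ := Fin.exists_succ_eq.mpr hjy0
      rw [hσs i', hσs jx'] at hax
      rw [hσs i', hσs jy'] at hay
      rw [hσs jx', hσs jy'] at hne ⊢
      have hlt_x : i' < jx' := by rwa [Fin.succ_lt_succ_iff] at hjx
      have hlt_y : i' < jy' := by rwa [Fin.succ_lt_succ_iff] at hjy
      have hne' : σ' jx' ≠ σ' jy' := fun h => hne (by rw [h])
      exact hσ' i' ⟨jx', hlt_x, rfl, hax⟩ ⟨jy', hlt_y, rfl, hay⟩ hne'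


section rev
variable {V : Type*} {G : SimpleGraph V}

lemma path_loop_nil {u : V} {p : G.Walk u u} (hp : p.IsPath) : p = Walk.nil := by
  cases p with
  | nil => rfl
  | cons h q =>
    rw [Walk.cons_isPath_iff] at hp
    exact absurd q.end_mem_support hp.2

lemma cycle_chord_setup {v : V} (w : G.Walk v v) (hc : w.IsCycle) (hl : 4 ≤ w.length) :
    ∃ x y, x ∈ w.support.tail ∧ y ∈ w.support.tail ∧ G.Adj v x ∧ G.Adj v y ∧ x ≠ y ∧
      s(x, y) ∉ w.edges := by
  cases w with
  | nil => simp at hl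
  | @cons _ x _ hvx p =>
    rw [Walk.cons_isCycle_iff] at hc
    obtain ⟨hp, hvxe⟩ := hc
    have hlp : 3 ≤ p.length := by
      rw [Walk.length_cons] at hl; omega
    have hprp : p.reverse.IsPath := hp.reverse
    have hprnotnil : ¬ p.reverse.Nil :=
      Walk.not_nil_of_ne (fun h => hvx.ne h)
    obtain ⟨y, hvy, r, hpr⟩ := Walk.not_nil_iff.mp hprnotnil
    have hyp : y ∈ p.support := by
      have : y ∈ p.reverse.support := by rw [hpr]; simp
      rwa [Walk.support_reverse, List.mem_reverse] at this
    have hxp : x ∈ p.support := p.start_mem_support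
    have hvyp : s(v, y) ∈ p.edges := by
      have : s(v, y) ∈ p.reverse.edges := by rw [hpr]; simp
      rwa [Walk.edges_reverse, List.mem_reverse] at this
    have hxy : x ≠ y := by
      rintro rfl
      exact hvxe hvyp
    refine ⟨x, y, by simpa using hxp, by simpa using hyp, hvx, hvy, hxy, ?_⟩
    intro hmem
    rw [Walk.edges_cons, List.mem_cons] at hmem
    rcases hmem with hmem | hmem
    · rw [Sym2.eq_iff] at hmem
      rcases hmem with ⟨rfl, -⟩ | ⟨-, rfl⟩
      · exact hvx.ne rfl
      · exact hvy.ne rfl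
    · have hmem' : s(x, y) ∈ p.reverse.edges := by
        rwa [Walk.edges_reverse, List.mem_reverse]
      rw [hpr, Walk.edges_cons, List.mem_cons] at hmem'
      rcases hmem' with hmem' | hmem'
      · rw [Sym2.eq_iff] at hmem'
        rcases hmem' with ⟨rfl, -⟩ | ⟨hxy', -⟩
        · exact hvx.ne rfl
        · exact hxy hxy'
      · -- s(x,y) ∈ r.edges, r : Walk y x
        have hrp : r.IsPath := by
          have := hprp
          rw [hpr, Walk.cons_isPath_iff] at this
          exact this.1
        cases r with
        | nil => simp at hmem'
        | @cons _ z _ hyz r₂ =>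
          rw [Walk.edges_cons, List.mem_cons] at hmem'
          rcases hmem' with hmem' | hmem'
          · rw [Sym2.eq_iff] at hmem'
            rcases hmem' with ⟨rfl, -⟩ | ⟨rfl, -⟩
            · exact hxy rfl
            · -- x = z, so r₂ : Walk x x is a path, hence nil; length contradiction
              have hr₂ : r₂.IsPath := hrp.of_cons
              have hnil := path_loop_nil hr₂
              have hplen : p.length = 2 := by
                have h1 : p.reverse.length = p.length := p.length_reverse
                rw [hpr] at h1
                simp [hnil] at h1
                omega
              omega
          · have hy2 : y ∈ r₂.support := r₂.snd_mem_support_of_mem_edges hmem'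
            rw [Walk.cons_isPath_iff] at hrp
            exact hrp.2 hy2

theorem chordal_of_peo {n : ℕ} {G : SimpleGraph (Fin n)} (σ : Equiv.Perm (Fin n))
    (hσ : ∀ i : Fin n,
      G.IsClique {v : Fin n | ∃ j : Fin n, i < j ∧ v = σ j ∧ G.Adj (σ i) (σ j)}) :
    SimpleGraph.IsChordal G := by
  intro v w hc hl
  classical
  obtain ⟨u, hu_mem, hu_min⟩ : ∃ u ∈ w.support, ∀ z ∈ w.support,
      ((σ.symm u : Fin n) : ℕ) ≤ ((σ.symm z : Fin n) : ℕ) := by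
    obtain ⟨u, hmem, hmin⟩ := w.support.toFinset.exists_min_image
      (fun z => ((σ.symm z : Fin n) : ℕ)) ⟨v, List.mem_toFinset.mpr w.start_mem_support⟩
    exact ⟨u, List.mem_toFinset.mp hmem, fun z hz => hmin z (List.mem_toFinset.mpr hz)⟩
  set w' := w.rotate u hu_mem with hw'
  have hc' : w'.IsCycle := hc.rotate hu_mem
  have hlen' : w'.length = w.length := by
    have h1 := (w.rotate_darts u hu_mem).perm.length_eq
    rw [← Walk.length_darts, ← Walk.length_darts w]
    exact h1
  obtain ⟨x, y, hx, hy, hux, huy, hxy, hne⟩ := cycle_chord_setup w' hc' (by omega)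
  have hedges : ∀ e, e ∈ w'.edges ↔ e ∈ w.edges := fun e =>
    (w.rotate_edges u hu_mem).perm.mem_iff
  have hsupp : ∀ z, z ∈ w'.support.tail → z ∈ w.support := by
    intro z hz
    have := (w.support_rotate u hu_mem).perm.mem_iff.mp hz
    exact List.mem_of_mem_tail this
  have hxs : x ∈ w.support := hsupp x hx
  have hys : y ∈ w.support := hsupp y hy
  set i : Fin n := σ.symm u with hi
  have hmem_clique : ∀ z : Fin n, z ∈ w.support → G.Adj u z →
      z ∈ {t : Fin n | ∃ j : Fin n, i < j ∧ t = σ j ∧ G.Adj (σ i) (σ j)} := by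
    intro z hzs hadj
    refine ⟨σ.symm z, ?_, by simp, by simpa [hi] using hadj⟩
    have hle := hu_min z hzs
    have hneq : σ.symm z ≠ i := fun h => hadj.ne' (by
      have : z = u := by
        have := congrArg σ h
        simpa [hi] using this
      exact this)
    rw [Fin.lt_def]
    rcases Nat.lt_or_ge (i : ℕ) ((σ.symm z : Fin n) : ℕ) with h | h
    · exact h
    · exfalso
      exact hneq (Fin.ext (by omega))
  have hGxy : G.Adj x y :=
    hσ i (hmem_clique x hxs hux) (hmem_clique y hys huy) hxy
  exact ⟨x, y, hxs, hys, hGxy, fun h => hne ((hedges _).mpr h)⟩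

end rev

end ChordalPEO

/-- A finite simple graph is chordal iff it admits a perfect elimination ordering: an
enumeration `σ 0, …, σ (n-1)` of the vertices such that for every `i`, the later neighbors
`{σ j | j > i, σ j adjacent to σ i}` form a clique. -/
theorem chordal_iff_perfect_elimination_ordering (n : ℕ) (G : SimpleGraph (Fin n)) :
    G.IsChordal ↔
      ∃ σ : Equiv.Perm (Fin n), ∀ i : Fin n,
        G.IsClique {v : Fin n | ∃ j : Fin n, i < j ∧ v = σ j ∧ G.Adj (σ i) (σ j)} := by
  constructor
  · intro h
    exact ChordalPEO.peo_of_chordal n G h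
  · rintro ⟨σ, hσ⟩
    exact ChordalPEO.chordal_of_peo σ hσ
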